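/- arXiv:2005.13268 — 4 statements merged into one kernel-verified Lean document; each statement's English description precedes it below -/
import Mathlib

section
/- Let R₀ > 0 and λ ∈ ℝ. For all x, y ∈ ℝ³ with |y| ≤ R₀ ≤ |x|/2 and all θ ∈ [0,1], one has |x − θy| ≥ |x|/2 and (1 + 2|λ|R₀)(1 + s(λ(x − θy))) ≥ 1 + s(λx), where s(z) = |z| + z₁. -/
lemma coord_abs_le_norm (z : EuclideanSpace ℝ (Fin 3)) : |z 0| ≤ ‖z‖ := by
  rw [EuclideanSpace.norm_eq]
  calc |z 0| = Real.sqrt (‖z 0‖ ^ 2) := by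
        rw [Real.norm_eq_abs, Real.sqrt_sq_eq_abs, abs_abs]
    _ ≤ _ := by
        apply Real.sqrt_le_sqrt
        exact Finset.single_le_sum (f := fun i => ‖z i‖ ^ 2)
          (fun i _ => sq_nonneg _) (Finset.mem_univ 0)

/-- For `‖y‖ ≤ R₀ ≤ ‖x‖/2` and `θ ∈ [0,1]`: `‖x - θ y‖ ≥ ‖x‖/2` and
`(1 + 2|λ|R₀)(1 + s(λ(x - θy))) ≥ 1 + s(λ x)` where `s z = ‖z‖ + z₁`. -/
theorem wake_estimates_segment (R₀ lam : ℝ) (hR₀ : 0 < R₀)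
    (x y : EuclideanSpace ℝ (Fin 3)) (θ : ℝ)
    (hy : ‖y‖ ≤ R₀) (hx : R₀ ≤ ‖x‖ / 2) (hθ : θ ∈ Set.Icc (0 : ℝ) 1) :
    ‖x‖ / 2 ≤ ‖x - θ • y‖ ∧
      1 + (‖lam • x‖ + (lam • x) 0) ≤
        (1 + 2 * |lam| * R₀) *
          (1 + (‖lam • (x - θ • y)‖ + (lam • (x - θ • y)) 0)) := by
  obtain ⟨hθ0, hθ1⟩ := hθ
  have hθy : ‖θ • y‖ ≤ R₀ := by
    rw [norm_smul, Real.norm_eq_abs, abs_of_nonneg hθ0]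
    calc θ * ‖y‖ ≤ 1 * ‖y‖ := by
          apply mul_le_mul_of_nonneg_right hθ1 (norm_nonneg _)
      _ = ‖y‖ := one_mul _
      _ ≤ R₀ := hy
  have h1 : ‖x‖ / 2 ≤ ‖x - θ • y‖ := by
    have := norm_sub_norm_le x (θ • y)
    linarith
  refine ⟨h1, ?_⟩
  set a := lam • x
  set b := lam • (x - θ • y)
  have hab : ‖a - b‖ ≤ |lam| * R₀ := by
    have : a - b = lam • (θ • y) := by
      simp [a, b, smul_sub]
    rw [this, norm_smul, Real.norm_eq_abs]
    exact mul_le_mul_of_nonneg_left hθy (abs_nonneg _)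
  have hb0 : 0 ≤ ‖b‖ + b 0 := by
    have := coord_abs_le_norm b
    have := abs_le.mp this
    linarith [this.1]
  have hsa : ‖a‖ + a 0 ≤ ‖b‖ + b 0 + 2 * (|lam| * R₀) := by
    have hn : ‖a‖ ≤ ‖b‖ + ‖a - b‖ := by
      calc ‖a‖ = ‖b + (a - b)‖ := by congr 1; abel
        _ ≤ ‖b‖ + ‖a - b‖ := norm_add_le _ _
    have hc : a 0 - b 0 ≤ ‖a - b‖ := by
      have := coord_abs_le_norm (a - b)
      have h2 := abs_le.mp this
      have : (a - b) 0 = a 0 - b 0 := rfl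
      linarith [h2.2, this ▸ h2.2]
    have h3 : (a - b) 0 = a 0 - b 0 := rfl
    have := coord_abs_le_norm (a - b)
    rw [h3] at this
    have := abs_le.mp this
    linarith [this.2]
  have hlR : 0 ≤ |lam| * R₀ := mul_nonneg (abs_nonneg _) hR₀.le
  nlinarith [mul_nonneg (mul_nonneg (by norm_num : (0:ℝ) ≤ 2) hlR) hb0]
end

section
/- Let f : ℝ³ → ℝ be C¹ with |∇f(z)| ≤ K[|z|(1 + s(λz))]^{-3/2} for |z| ≥ R₀, where s(z) = |z| + z₁ and λ ≠ 0. Let g : ℝ³ → ℝ be supported in the ball B_{R₀} with ∫|g| ≤ M. Then for |x| ≥ 2R₀, |(f ∗ g)(x) − f(x)∫g(y)dy| ≤ C K M [|x|(1 + s(λx))]^{-3/2}, with C depending on λ, R₀. -/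
open MeasureTheory

lemma abs_coord_le_norm3 (v : EuclideanSpace ℝ (Fin 3)) : |v 0| ≤ ‖v‖ := by
  rw [EuclideanSpace.norm_eq]
  have h1 : |v 0| = Real.sqrt (‖v 0‖ ^ 2) := by
    rw [Real.sqrt_sq_eq_abs]; simp
  rw [h1]
  apply Real.sqrt_le_sqrt
  exact Finset.single_le_sum (f := fun i => ‖v i‖ ^ 2)
    (fun i _ => by positivity) (Finset.mem_univ 0)

lemma s_nonneg3 (v : EuclideanSpace ℝ (Fin 3)) : 0 ≤ ‖v‖ + v 0 := by
  have := abs_coord_le_norm3 v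
  have := neg_abs_le (v 0)
  linarith

lemma s_diff_le3 (v w : EuclideanSpace ℝ (Fin 3)) :
    ‖v‖ + v 0 ≤ (‖w‖ + w 0) + 2 * ‖v - w‖ := by
  have h1 : ‖v‖ - ‖w‖ ≤ ‖v - w‖ := norm_sub_norm_le v w
  have h2 : |v 0 - w 0| ≤ ‖v - w‖ := by
    have := abs_coord_le_norm3 (v - w)
    simpa using this
  have h3 := abs_le.mp h2
  linarith [h3.2]

/-- Leading-term estimate: if `‖∇f(z)‖ ≤ K [|z|(1+s(λz))]^{-3/2}` for `|z| ≥ R₀` and `g` is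
supported in `B_{R₀}` with `∫|g| ≤ M`, then for `|x| ≥ 2R₀` the convolution satisfies
`|(f ∗ g)(x) - f(x) ∫ g| ≤ C K M [|x|(1+s(λx))]^{-3/2}`. -/
theorem conv_leading_term_estimate (lam R₀ : ℝ) (hlam : lam ≠ 0) (hR₀ : 0 < R₀) :
    ∃ C > 0, ∀ (K M : ℝ) (f g : EuclideanSpace ℝ (Fin 3) → ℝ),
      ContDiff ℝ 1 f →
      (∀ z, R₀ ≤ ‖z‖ →
        ‖fderiv ℝ f z‖ ≤ K * (‖z‖ * (1 + (‖lam • z‖ + (lam • z) 0))) ^ (-(3 / 2 : ℝ))) →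
      Integrable g →
      Function.support g ⊆ Metric.ball (0 : EuclideanSpace ℝ (Fin 3)) R₀ →
      (∫ y, |g y|) ≤ M →
      ∀ x : EuclideanSpace ℝ (Fin 3), 2 * R₀ ≤ ‖x‖ →
        |(∫ y, f (x - y) * g y) - f x * ∫ y, g y|
          ≤ C * K * M * (‖x‖ * (1 + (‖lam • x‖ + (lam • x) 0))) ^ (-(3 / 2 : ℝ)) := by
  set D : ℝ := 2 * (1 + 2 * |lam| * R₀) with hD
  have hDpos : 0 < D := by
    have : 0 ≤ |lam| := abs_nonneg _
    have : 0 ≤ 2 * |lam| * R₀ := by positivity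
    simp only [hD]; linarith
  refine ⟨R₀ * D ^ (3 / 2 : ℝ), by positivity, ?_⟩
  intro K M f g hf hfd hg hsupp hgM x hx
  have hxpos : 0 < ‖x‖ := by linarith
  -- s(λx) ≥ 0
  have hsx : 0 ≤ ‖lam • x‖ + (lam • x) 0 := s_nonneg3 _
  set A : ℝ := ‖x‖ * (1 + (‖lam • x‖ + (lam • x) 0)) with hA
  have hApos : 0 < A := by
    apply mul_pos hxpos; linarith
  -- K ≥ 0
  have hK : 0 ≤ K := by
    set z : EuclideanSpace ℝ (Fin 3) := R₀ • (EuclideanSpace.single (0 : Fin 3) (1 : ℝ)) with hz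
    have hzn : ‖z‖ = R₀ := by
      rw [hz, norm_smul, EuclideanSpace.norm_single]
      simp [abs_of_pos hR₀]
    have hb := hfd z (le_of_eq hzn.symm)
    have hppos : 0 < (‖z‖ * (1 + (‖lam • z‖ + (lam • z) 0))) ^ (-(3 / 2 : ℝ)) := by
      apply Real.rpow_pos_of_pos
      apply mul_pos (hzn ▸ hR₀)
      linarith [s_nonneg3 (lam • z)]
    nlinarith [norm_nonneg (fderiv ℝ f z), hb]
  have hM : 0 ≤ M := le_trans (integral_nonneg (fun y => abs_nonneg _)) hgM
  -- derivative bound on points near x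
  set B : ℝ := K * D ^ (3 / 2 : ℝ) * A ^ (-(3 / 2 : ℝ)) with hB
  have hBnn : 0 ≤ B := by positivity
  have hderiv : ∀ z : EuclideanSpace ℝ (Fin 3), ‖x - z‖ ≤ R₀ → ‖fderiv ℝ f z‖ ≤ B := by
    intro z hzx
    have hz1 : ‖x‖ / 2 ≤ ‖z‖ := by
      have := norm_sub_norm_le x z
      linarith
    have hzR : R₀ ≤ ‖z‖ := by linarith
    have hsz : 0 ≤ ‖lam • z‖ + (lam • z) 0 := s_nonneg3 _
    -- s(λx) ≤ s(λz) + 2 |lam| R₀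
    have hsd : ‖lam • x‖ + (lam • x) 0 ≤ (‖lam • z‖ + (lam • z) 0) + 2 * |lam| * R₀ := by
      have h1 := s_diff_le3 (lam • x) (lam • z)
      have h2 : ‖lam • x - lam • z‖ = |lam| * ‖x - z‖ := by
        rw [← smul_sub, norm_smul, Real.norm_eq_abs]
      have h3 : |lam| * ‖x - z‖ ≤ |lam| * R₀ :=
        mul_le_mul_of_nonneg_left hzx (abs_nonneg _)
      rw [h2] at h1
      linarith
    -- key: A ≤ D * (‖z‖ * (1 + s(λz)))
    have hkey : A ≤ D * (‖z‖ * (1 + (‖lam • z‖ + (lam • z) 0))) := by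
      have h4 : 1 + (‖lam • x‖ + (lam • x) 0)
          ≤ (1 + 2 * |lam| * R₀) * (1 + (‖lam • z‖ + (lam • z) 0)) := by
        have h5 : 0 ≤ 2 * |lam| * R₀ := by positivity
        nlinarith
      have h6 : 0 ≤ 1 + (‖lam • x‖ + (lam • x) 0) := by linarith
      calc A = ‖x‖ * (1 + (‖lam • x‖ + (lam • x) 0)) := rfl
        _ ≤ (2 * ‖z‖) * ((1 + 2 * |lam| * R₀) * (1 + (‖lam • z‖ + (lam • z) 0))) := by
            apply mul_le_mul (by linarith) h4 h6 (by linarith)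
        _ = D * (‖z‖ * (1 + (‖lam • z‖ + (lam • z) 0))) := by rw [hD]; ring
    have hzb : 0 < ‖z‖ * (1 + (‖lam • z‖ + (lam • z) 0)) := by
      apply mul_pos (by linarith) (by linarith)
    have hrp : (‖z‖ * (1 + (‖lam • z‖ + (lam • z) 0))) ^ (-(3 / 2 : ℝ))
        ≤ (A / D) ^ (-(3 / 2 : ℝ)) := by
      apply Real.rpow_le_rpow_of_nonpos (by positivity) _ (by norm_num)
      rw [div_le_iff₀ hDpos]
      linarith [hkey]
    have hAD : (A / D) ^ (-(3 / 2 : ℝ)) = D ^ (3 / 2 : ℝ) * A ^ (-(3 / 2 : ℝ)) := by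
      rw [Real.div_rpow hApos.le hDpos.le, Real.rpow_neg hApos.le, Real.rpow_neg hDpos.le]
      field_simp
    calc ‖fderiv ℝ f z‖ ≤ K * (‖z‖ * (1 + (‖lam • z‖ + (lam • z) 0))) ^ (-(3 / 2 : ℝ)) :=
          hfd z hzR
      _ ≤ K * (D ^ (3 / 2 : ℝ) * A ^ (-(3 / 2 : ℝ))) := by
          apply mul_le_mul_of_nonneg_left _ hK
          rw [← hAD]; exact hrp
      _ = B := by rw [hB]; ring
  -- MVT estimate
  have hmvt : ∀ y : EuclideanSpace ℝ (Fin 3), ‖y‖ ≤ R₀ → |f (x - y) - f x| ≤ B * R₀ := by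
    intro y hy
    have hdiff : ∀ w ∈ segment ℝ (x - y) x, DifferentiableAt ℝ f w :=
      fun w _ => (hf.differentiable one_ne_zero) w
    have hbd : ∀ w ∈ segment ℝ (x - y) x, ‖fderiv ℝ f w‖ ≤ B := by
      intro w hw
      obtain ⟨a, b, ha, hb, hab, hw⟩ := hw
      have hw' : x - w = a • y := by
        have hb1 : b = 1 - a := by linarith
        subst hb1
        rw [← hw]; module
      apply hderiv
      rw [hw', norm_smul, Real.norm_eq_abs, abs_of_nonneg ha]
      calc a * ‖y‖ ≤ 1 * ‖y‖ := by
            apply mul_le_mul_of_nonneg_right (by linarith) (norm_nonneg _)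
        _ ≤ R₀ := by linarith
    have := Convex.norm_image_sub_le_of_norm_fderiv_le hdiff hbd (convex_segment _ _)
      (left_mem_segment ℝ (x - y) x) (right_mem_segment ℝ (x - y) x)
    rw [Real.norm_eq_abs] at this
    have hxy : ‖x - (x - y)‖ = ‖y‖ := by rw [sub_sub_cancel]
    rw [hxy] at this
    calc |f (x - y) - f x| = |f x - f (x - y)| := abs_sub_comm _ _
      _ ≤ B * ‖y‖ := this
      _ ≤ B * R₀ := mul_le_mul_of_nonneg_left hy hBnn
  -- pointwise bound
  set φ : EuclideanSpace ℝ (Fin 3) → ℝ := fun y => (f (x - y) - f x) * g y with hφ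
  have hptw : ∀ y, |φ y| ≤ B * R₀ * |g y| := by
    intro y
    by_cases hgy : g y = 0
    · simp [hφ, hgy]
    · have hy : y ∈ Metric.ball (0 : EuclideanSpace ℝ (Fin 3)) R₀ := hsupp hgy
      rw [Metric.mem_ball, dist_zero_right] at hy
      rw [hφ, abs_mul]
      exact mul_le_mul_of_nonneg_right (hmvt y hy.le) (abs_nonneg _)
  have hφmeas : AEStronglyMeasurable φ volume := by
    apply AEStronglyMeasurable.mul _ hg.aestronglyMeasurable
    exact ((hf.continuous.comp (continuous_const.sub continuous_id)).sub
      continuous_const).aestronglyMeasurable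
  have hbint : Integrable (fun y => B * R₀ * |g y|) volume := (hg.abs.const_mul _)
  have hφint : Integrable φ volume := by
    apply Integrable.mono' hbint hφmeas
    filter_upwards with y
    rw [Real.norm_eq_abs]
    exact hptw y
  -- split the integral
  have hsplit : (∫ y, f (x - y) * g y) - f x * ∫ y, g y = ∫ y, φ y := by
    have hfxg : Integrable (fun y => f x * g y) volume := hg.const_mul _
    have heq : (fun y => f (x - y) * g y) = fun y => φ y + f x * g y := by
      funext y; rw [hφ]; ring
    rw [heq, integral_add hφint hfxg, integral_const_mul]
    ring
  rw [hsplit]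
  calc |∫ y, φ y| ≤ ∫ y, |φ y| := by
        simpa [Real.norm_eq_abs] using norm_integral_le_integral_norm φ
    _ ≤ ∫ y, B * R₀ * |g y| := integral_mono hφint.abs hbint hptw
    _ = B * R₀ * ∫ y, |g y| := integral_const_mul _ _
    _ ≤ B * R₀ * M := mul_le_mul_of_nonneg_left hgM (by positivity)
    _ = R₀ * D ^ (3 / 2 : ℝ) * K * M * A ^ (-(3 / 2 : ℝ)) := by rw [hB]; ring
end

section
/- Let A ≥ 2, B ≥ 0 with A + min{1,B} > 3. If g : ℝ³ → ℝ satisfies |g(x)| ≤ M(1+|x|)^{-A}(1+s(x))^{-B}, then g ∈ L¹(ℝ³). -/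
open Real
set_option maxHeartbeats 2000000

lemma rpow_two_mul_half (x c : ℝ) (hx : 0 ≤ x) : (x ^ 2) ^ (c / 2) = x ^ c := by
  rw [← Real.rpow_natCast x 2, ← Real.rpow_mul hx]
  congr 1
  push_cast
  ring

lemma aniso_key (A B' : ℝ) (hA3 : A ≤ 3) (hB0 : 0 ≤ B') (hB1 : B' ≤ 1)
    (h3 : 3 < A + B') (t ρ : ℝ) (hρ : 0 ≤ ρ) :
    (1 + |t|) ^ ((A + B' - 1) / 2) * (1 + ρ) ^ ((A + B' + 1) / 2) ≤
      128 * ((1 + Real.sqrt (t ^ 2 + ρ ^ 2)) ^ A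
        * (1 + (Real.sqrt (t ^ 2 + ρ ^ 2) + t)) ^ B') := by
  set p : ℝ := (A + B' - 1) / 2 with hp
  set q : ℝ := (A + B' + 1) / 2 with hq
  set r : ℝ := Real.sqrt (t ^ 2 + ρ ^ 2) with hr
  have hr0 : 0 ≤ r := Real.sqrt_nonneg _
  have htr : |t| ≤ r := by
    have := Real.sqrt_le_sqrt (show t ^ 2 ≤ t ^ 2 + ρ ^ 2 by nlinarith)
    rwa [Real.sqrt_sq_eq_abs] at this
  have hρr : ρ ≤ r := by
    have := Real.sqrt_le_sqrt (show ρ ^ 2 ≤ t ^ 2 + ρ ^ 2 by nlinarith)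
    rwa [Real.sqrt_sq hρ] at this
  have hrle : r ≤ |t| + ρ := by
    have h1 : t ^ 2 + ρ ^ 2 ≤ (|t| + ρ) ^ 2 := by
      have := abs_nonneg t
      nlinarith [sq_abs t]
    have := Real.sqrt_le_sqrt h1
    rwa [Real.sqrt_sq (by positivity)] at this
  have hrsq : r ^ 2 = t ^ 2 + ρ ^ 2 := Real.sq_sqrt (by positivity)
  have hppq : p = (A + B' - 1) / 2 := hp
  have hqq : q = (A + B' + 1) / 2 := hq
  clear_value p q r
  clear hp hq hr
  have hs0 : 0 ≤ r + t := by have := neg_abs_le t; linarith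
  have h1r : (1:ℝ) ≤ 1 + r := by linarith
  have h1s : (1:ℝ) ≤ 1 + (r + t) := by linarith
  have h1t : (1:ℝ) ≤ 1 + |t| := by have := abs_nonneg t; linarith
  have h1ρ : (1:ℝ) ≤ 1 + ρ := by linarith
  have hp1 : 1 ≤ p := by rw [hppq]; linarith
  have hq0 : 0 < q := by rw [hqq]; linarith
  have h2q : (2:ℝ) ^ q ≤ 8 := by
    calc (2:ℝ) ^ q ≤ 2 ^ (3:ℝ) :=
          Real.rpow_le_rpow_of_exponent_le one_le_two (by rw [hqq]; linarith)
      _ = 8 := by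
          rw [show (3:ℝ) = ((3:ℕ):ℝ) by norm_num, Real.rpow_natCast]; norm_num
  have hAp : 0 ≤ A - p := by rw [hppq]; linarith
  have hrA0 : (0:ℝ) ≤ (1 + r) ^ A := Real.rpow_nonneg (by linarith) A
  have hrA1 : (1:ℝ) ≤ (1 + r) ^ A := Real.one_le_rpow h1r (by linarith)
  have hsB1 : (1:ℝ) ≤ (1 + (r + t)) ^ B' := Real.one_le_rpow h1s hB0
  rcases le_or_gt 0 t with ht | ht
  · -- t ≥ 0
    rw [abs_of_nonneg ht] at *
    have e1 : (1 + t) ^ p = (1 + t) ^ (p - B') * (1 + t) ^ B' := by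
      rw [← Real.rpow_add (by linarith)]; ring_nf
    calc (1 + t) ^ p * (1 + ρ) ^ q
        = (1 + t) ^ (p - B') * (1 + ρ) ^ q * (1 + t) ^ B' := by rw [e1]; ring
      _ ≤ (1 + r) ^ (p - B') * (1 + r) ^ q * (1 + (r + t)) ^ B' := by
          gcongr <;> linarith
      _ = (1 + r) ^ A * (1 + (r + t)) ^ B' := by
          rw [← Real.rpow_add (by linarith), show p - B' + q = A by rw [hppq, hqq]; ring]
      _ ≤ 128 * ((1 + r) ^ A * (1 + (r + t)) ^ B') := by nlinarith
  · -- t < 0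
    rw [abs_of_neg ht] at *
    rcases le_or_gt (ρ ^ 2) (1 + -t) with hw | hw
    · -- wake-adjacent region: ρ² ≤ 1 + |t|
      have h4 : ((1 + ρ) ^ 2 : ℝ) ≤ 4 * (1 + -t) := by nlinarith
      have h42 : ((4:ℝ) * (1 + -t)) ^ (q / 2) = 2 ^ q * (1 + -t) ^ (q / 2) := by
        rw [Real.mul_rpow (by norm_num) (by linarith)]
        congr 1
        rw [show (4:ℝ) = 2 ^ 2 by norm_num, rpow_two_mul_half 2 q (by norm_num)]
      calc (1 + -t) ^ p * (1 + ρ) ^ q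
          = (1 + -t) ^ p * ((1 + ρ) ^ 2) ^ (q / 2) := by
            rw [rpow_two_mul_half _ _ (by linarith)]
        _ ≤ (1 + -t) ^ p * (4 * (1 + -t)) ^ (q / 2) := by
            gcongr <;> first | linarith | positivity
        _ = 2 ^ q * ((1 + -t) ^ p * (1 + -t) ^ (q / 2)) := by rw [h42]; ring
        _ = 2 ^ q * (1 + -t) ^ (p + q / 2) := by rw [← Real.rpow_add (by linarith)]
        _ ≤ 8 * (1 + r) ^ A := by
            have b1 : (1 + -t) ^ (p + q / 2) ≤ (1 + r) ^ (p + q / 2) := by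
              gcongr <;> linarith
            have b2 : (1 + r) ^ (p + q / 2) ≤ (1 + r) ^ A := by
              apply Real.rpow_le_rpow_of_exponent_le h1r
              rw [hppq, hqq]; linarith
            have b3 : (0:ℝ) ≤ (1 + -t) ^ (p + q / 2) := by positivity
            nlinarith
        _ ≤ 128 * ((1 + r) ^ A * (1 + (r + t)) ^ B') := by nlinarith
    · -- far wake region: ρ² > 1 + |t|
      have hρ1 : 1 ≤ ρ := by nlinarith
      have hseq : (r + t) * (r + -t) = ρ ^ 2 := by nlinarith
      rcases le_or_gt (-t) ρ with hTρ | hTρ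
      · -- |t| ≤ ρ : s ≳ ρ
        have hs3 : ρ ≤ 3 * (1 + (r + t)) := by nlinarith
        have c1 : (1 + ρ) ^ B' ≤ 4 ^ B' * (1 + (r + t)) ^ B' := by
          rw [← Real.mul_rpow (by norm_num) (by linarith)]
          apply Real.rpow_le_rpow (by linarith) (by nlinarith) hB0
        have c2 : (4:ℝ) ^ B' ≤ 4 := by
          calc (4:ℝ) ^ B' ≤ 4 ^ (1:ℝ) :=
                Real.rpow_le_rpow_of_exponent_le (by norm_num) hB1
            _ = 4 := Real.rpow_one 4
        have e3 : (1 + ρ) ^ q = (1 + ρ) ^ (A - p) * (1 + ρ) ^ B' := by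
          rw [← Real.rpow_add (by linarith), show A - p + B' = q by rw [hppq, hqq]; ring]
        have c3 : (0:ℝ) ≤ (1 + (r+t)) ^ B' := by positivity
        have c4 : (0:ℝ) ≤ (1 + ρ) ^ (A - p) := by positivity
        calc (1 + -t) ^ p * (1 + ρ) ^ q
            = (1 + -t) ^ p * (1 + ρ) ^ (A - p) * (1 + ρ) ^ B' := by rw [e3]; ring
          _ ≤ (1 + r) ^ p * (1 + r) ^ (A - p) * (4 ^ B' * (1 + (r + t)) ^ B') := by
              have d1 : (1 + -t) ^ p ≤ (1 + r) ^ p :=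
                Real.rpow_le_rpow (by linarith) (by linarith) (by linarith)
              have d2 : (1 + ρ) ^ (A - p) ≤ (1 + r) ^ (A - p) :=
                Real.rpow_le_rpow (by linarith) (by linarith) hAp
              have d3 : (0:ℝ) ≤ (1 + r) ^ p := Real.rpow_nonneg (by linarith) _
              have d4 : (0:ℝ) ≤ (1 + r) ^ (A - p) := Real.rpow_nonneg (by linarith) _
              exact mul_le_mul (mul_le_mul d1 d2 c4 d3) c1 (by positivity)
                (mul_nonneg d3 d4)
          _ = (1 + r) ^ A * (4 ^ B' * (1 + (r + t)) ^ B') := by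
              rw [← Real.rpow_add (by linarith)]; ring_nf
          _ ≤ 128 * ((1 + r) ^ A * (1 + (r + t)) ^ B') := by
              have hXY : (0:ℝ) ≤ (1 + r) ^ A * (1 + (r + t)) ^ B' := mul_nonneg hrA0 c3
              nlinarith [mul_le_mul_of_nonneg_right c2 hXY, hXY]
      · -- ρ < |t| : deep wake
        have hT1 : 1 < -t := by nlinarith
        have hs3 : ρ ^ 2 ≤ (r + t) * (3 * -t) := by nlinarith
        have hρ0 : (0:ℝ) < ρ := by linarith
        have h1X : (0:ℝ) < 1 + -t := by linarith
        have hκ0 : 0 ≤ q - 2 * B' := by rw [hqq]; linarith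
        have n1 : (0:ℝ) ≤ (1 + -t) ^ p := Real.rpow_nonneg (by linarith) _
        have nsB : (0:ℝ) ≤ (1 + (r + t)) ^ B' := Real.rpow_nonneg (by linarith) _
        have nXB : (0:ℝ) ≤ (1 + -t) ^ B' := Real.rpow_nonneg (by linarith) _
        have nXκ : (0:ℝ) ≤ (1 + -t) ^ (q - 2 * B') := Real.rpow_nonneg (by linarith) _
        have s1 : (1 + ρ) ^ q ≤ 2 ^ q * ρ ^ q := by
          rw [← Real.mul_rpow (by norm_num) (by linarith)]
          exact Real.rpow_le_rpow (by linarith) (by linarith) (le_of_lt hq0)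
        have s2 : ρ ^ q = ρ ^ (2 * B') * ρ ^ (q - 2 * B') := by
          rw [← Real.rpow_add hρ0]; congr 1; ring
        have s3 : ρ ^ (q - 2 * B') ≤ (1 + -t) ^ (q - 2 * B') :=
          Real.rpow_le_rpow (by linarith) (by linarith) hκ0
        have s4 : ρ ^ (2 * B') ≤ 3 * ((1 + -t) ^ B' * (1 + (r + t)) ^ B') := by
          have e : ρ ^ (2 * B') = (ρ ^ 2) ^ B' := by
            rw [← Real.rpow_natCast ρ 2, ← Real.rpow_mul hρ]; norm_num
          have h5 : (ρ ^ 2 : ℝ) ≤ 3 * (1 + -t) * (1 + (r + t)) := by nlinarith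
          have h6 : ((ρ ^ 2 : ℝ)) ^ B' ≤ (3 * (1 + -t) * (1 + (r + t))) ^ B' :=
            Real.rpow_le_rpow (by positivity) h5 hB0
          rw [Real.mul_rpow (by positivity) (by linarith),
            Real.mul_rpow (by norm_num) (by linarith)] at h6
          have h7 : (3:ℝ) ^ B' ≤ 3 := by
            calc (3:ℝ) ^ B' ≤ 3 ^ (1:ℝ) :=
                  Real.rpow_le_rpow_of_exponent_le (by norm_num) hB1
              _ = 3 := Real.rpow_one 3
          rw [e]
          nlinarith [mul_nonneg nXB nsB]
        have s5 : (0:ℝ) ≤ 2 ^ q := Real.rpow_nonneg (by norm_num) _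
        calc (1 + -t) ^ p * (1 + ρ) ^ q
            ≤ (1 + -t) ^ p * (2 ^ q * (ρ ^ (2 * B') * ρ ^ (q - 2 * B'))) := by
              apply mul_le_mul_of_nonneg_left _ n1
              rw [← s2]; exact s1
          _ ≤ (1 + -t) ^ p * (2 ^ q * ((3 * ((1 + -t) ^ B' * (1 + (r + t)) ^ B')) *
                (1 + -t) ^ (q - 2 * B'))) := by
              apply mul_le_mul_of_nonneg_left _ n1
              apply mul_le_mul_of_nonneg_left _ s5
              exact mul_le_mul s4 s3 (Real.rpow_nonneg hρ _)
                (by positivity)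
          _ = (2 ^ q * 3) * ((1 + (r + t)) ^ B' *
                ((1 + -t) ^ p * ((1 + -t) ^ B' * (1 + -t) ^ (q - 2 * B')))) := by ring
          _ = (2 ^ q * 3) * ((1 + (r + t)) ^ B' * (1 + -t) ^ A) := by
              rw [← Real.rpow_add h1X, ← Real.rpow_add h1X,
                show p + (B' + (q - 2 * B')) = A by rw [hppq, hqq]; ring]
          _ ≤ (2 ^ q * 3) * ((1 + (r + t)) ^ B' * (1 + r) ^ A) := by
              apply mul_le_mul_of_nonneg_left _ (by positivity)
              exact mul_le_mul_of_nonneg_left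
                (Real.rpow_le_rpow (by linarith) (by linarith) (by linarith)) nsB
          _ ≤ 128 * ((1 + r) ^ A * (1 + (r + t)) ^ B') := by
              nlinarith [mul_nonneg nsB hrA0, h2q]

open MeasureTheory

lemma aniso_split (u w q : ℝ) (hq : 0 ≤ q) :
    (1 + Real.sqrt (u ^ 2 + w ^ 2)) ^ (-q) ≤
      (1 + |u|) ^ (-(q / 2)) * (1 + |w|) ^ (-(q / 2)) := by
  set ρ := Real.sqrt (u ^ 2 + w ^ 2) with hρdef
  have hρ0 : 0 ≤ ρ := Real.sqrt_nonneg _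
  have hu : |u| ≤ ρ := by
    have := Real.sqrt_le_sqrt (show u ^ 2 ≤ u ^ 2 + w ^ 2 by nlinarith)
    rwa [Real.sqrt_sq_eq_abs] at this
  have hw : |w| ≤ ρ := by
    have := Real.sqrt_le_sqrt (show w ^ 2 ≤ u ^ 2 + w ^ 2 by nlinarith)
    rwa [Real.sqrt_sq_eq_abs] at this
  clear_value ρ
  have hmul : (1 + |u|) * (1 + |w|) ≤ (1 + ρ) ^ 2 := by
    nlinarith [abs_nonneg u, abs_nonneg w]
  have e1 : (1 + ρ) ^ (-q) = ((1 + ρ) ^ 2) ^ (-q / 2) :=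
    (rpow_two_mul_half (1 + ρ) (-q) (by positivity)).symm
  have e2 : ((1 + ρ) ^ 2) ^ (-q / 2) ≤ ((1 + |u|) * (1 + |w|)) ^ (-q / 2) :=
    Real.rpow_le_rpow_of_nonpos (by positivity) hmul (by linarith)
  rw [e1]
  refine e2.trans_eq ?_
  rw [Real.mul_rpow (by positivity) (by positivity)]
  rw [show -q / 2 = -(q / 2) by ring]

theorem integrable_of_anisotropic_decay (A B : ℝ) (hA : 2 ≤ A) (hB : 0 ≤ B)
    (hAB : 3 < A + min 1 B) (M : ℝ) (g : EuclideanSpace ℝ (Fin 3) → ℝ)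
    (hg : Measurable g)
    (hbd : ∀ x, |g x| ≤ M * (1 + ‖x‖) ^ (-A) * (1 + (‖x‖ + x 0)) ^ (-B)) :
    Integrable g := by
  set B' := min 1 B with hB'def
  have hB'0 : 0 ≤ B' := le_min zero_le_one hB
  have hB'1 : B' ≤ 1 := min_le_left _ _
  have hB'B : B' ≤ B := min_le_right _ _
  have hnorm : ∀ x : EuclideanSpace ℝ (Fin 3),
      ‖x‖ = Real.sqrt ((x 0) ^ 2 + (Real.sqrt ((x 1) ^ 2 + (x 2) ^ 2)) ^ 2) := by
    intro x
    rw [EuclideanSpace.norm_eq, Fin.sum_univ_three, Real.sq_sqrt (by positivity)]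
    · simp [Real.norm_eq_abs, sq_abs]
      ring_nf
  have habs : ∀ x : EuclideanSpace ℝ (Fin 3), |x 0| ≤ ‖x‖ := by
    intro x
    rw [hnorm x]
    have := Real.sqrt_le_sqrt (show (x 0) ^ 2 ≤ (x 0) ^ 2 +
      (Real.sqrt ((x 1) ^ 2 + (x 2) ^ 2)) ^ 2 by nlinarith [sq_nonneg (Real.sqrt ((x 1)^2 + (x 2)^2))])
    rwa [Real.sqrt_sq_eq_abs] at this
  have hs0 : ∀ x : EuclideanSpace ℝ (Fin 3), 0 ≤ ‖x‖ + x 0 := by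
    intro x; have h := habs x; have := neg_abs_le (x 0); linarith
  have hM : ∀ x : EuclideanSpace ℝ (Fin 3),
      |g x| ≤ |M| * ((1 + ‖x‖) ^ (-A) * (1 + (‖x‖ + x 0)) ^ (-B')) := by
    intro x
    have h1 := hbd x
    have hsx := hs0 x
    have e1 : (1 + (‖x‖ + x 0)) ^ (-B) ≤ (1 + (‖x‖ + x 0)) ^ (-B') :=
      Real.rpow_le_rpow_of_exponent_le (by linarith) (by linarith)
    have nn1 : (0:ℝ) ≤ (1 + ‖x‖) ^ (-A) := Real.rpow_nonneg (by positivity) _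
    have nn2 : (0:ℝ) ≤ (1 + (‖x‖ + x 0)) ^ (-B) := Real.rpow_nonneg (by linarith) _
    calc |g x| ≤ M * (1 + ‖x‖) ^ (-A) * (1 + (‖x‖ + x 0)) ^ (-B) := h1
      _ ≤ |M| * (1 + ‖x‖) ^ (-A) * (1 + (‖x‖ + x 0)) ^ (-B) := by
          have hM' := le_abs_self M
          nlinarith [mul_nonneg nn1 nn2]
      _ ≤ |M| * (1 + ‖x‖) ^ (-A) * (1 + (‖x‖ + x 0)) ^ (-B') :=
          mul_le_mul_of_nonneg_left e1 (mul_nonneg (abs_nonneg M) nn1)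
      _ = |M| * ((1 + ‖x‖) ^ (-A) * (1 + (‖x‖ + x 0)) ^ (-B')) := by ring
  rcases lt_or_ge 3 A with hA3 | hA3
  · -- easy case: A > 3
    have hint : Integrable (fun x : EuclideanSpace ℝ (Fin 3) => |M| * (1 + ‖x‖) ^ (-A)) := by
      refine (integrable_one_add_norm (E := EuclideanSpace ℝ (Fin 3)) (μ := volume) ?_).const_mul _
      simp only [finrank_euclideanSpace_fin]
      exact_mod_cast hA3
    apply Integrable.mono' hint hg.aestronglyMeasurable
    filter_upwards with x
    rw [Real.norm_eq_abs]
    refine (hM x).trans ?_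
    have h2 : (1 + (‖x‖ + x 0)) ^ (-B') ≤ 1 :=
      Real.rpow_le_one_of_one_le_of_nonpos (by linarith [hs0 x]) (by linarith)
    have nn1 : (0:ℝ) ≤ (1 + ‖x‖) ^ (-A) := Real.rpow_nonneg (by positivity) _
    nlinarith [abs_nonneg M, mul_nonneg (abs_nonneg M) nn1]
  · -- hard case: 2 < A ≤ 3
    have hAB' : 3 < A + B' := hAB
    set p : ℝ := (A + B' - 1) / 2 with hpdef
    set q : ℝ := (A + B' + 1) / 2 with hqdef
    have hp1 : 1 < p := by rw [hpdef]; linarith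
    have hq2 : 1 < q / 2 := by rw [hqdef]; linarith
    have hq0 : 0 ≤ q := by rw [hqdef]; linarith
    have hintH : Integrable (fun v : Fin 3 → ℝ =>
        (1 + |v 0|) ^ (-p) * ((1 + |v 1|) ^ (-(q / 2)) * (1 + |v 2|) ^ (-(q / 2)))) := by
      have hint : ∀ c : ℝ, 1 < c → Integrable (fun a : ℝ => (1 + |a|) ^ (-c)) := by
        intro c hc
        have := integrable_one_add_norm (E := ℝ) (μ := volume) (r := c) (by simpa using hc)
        simpa [Real.norm_eq_abs] using this
      have h := Integrable.fintype_prod (𝕜 := ℝ) (E := ℝ) (μ := fun _ => volume)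
        (f := ![fun a => (1 + |a|) ^ (-p), fun a => (1 + |a|) ^ (-(q / 2)),
          fun a => (1 + |a|) ^ (-(q / 2))]) (by
          intro i
          fin_cases i <;> simp only [Matrix.cons_val_zero, Matrix.cons_val_one, Matrix.head_cons,
            Matrix.cons_val_two, Matrix.tail_cons] <;>
            [exact hint p hp1; exact hint _ hq2; exact hint _ hq2])
      simpa [Fin.prod_univ_three, mul_assoc, volume_pi] using h
    have hintE : Integrable (fun x : EuclideanSpace ℝ (Fin 3) => (128 * |M|) *
        ((1 + |x 0|) ^ (-p) * ((1 + |x 1|) ^ (-(q / 2)) * (1 + |x 2|) ^ (-(q / 2))))) := by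
      have hmp := EuclideanSpace.volume_preserving_symm_measurableEquiv_toLp (Fin 3)
      have htr := (hmp.integrable_comp_emb
        (MeasurableEquiv.measurableEmbedding (MeasurableEquiv.toLp 2 (Fin 3 → ℝ)).symm)).mpr hintH
      exact htr.const_mul _
    apply Integrable.mono' hintE hg.aestronglyMeasurable
    filter_upwards with x
    rw [Real.norm_eq_abs]
    refine (hM x).trans ?_
    -- now the pointwise bound
    set t := x 0 with htdef
    set ρ := Real.sqrt ((x 1) ^ 2 + (x 2) ^ 2) with hρdef
    have hρ0 : 0 ≤ ρ := Real.sqrt_nonneg _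
    have hxn : ‖x‖ = Real.sqrt (t ^ 2 + ρ ^ 2) := hnorm x
    have key := aniso_key A B' hA3 hB'0 hB'1 hAB' t ρ hρ0
    rw [← hxn] at key
    have hsx := hs0 x
    have hL : (0:ℝ) < (1 + |t|) ^ p * (1 + ρ) ^ q := by positivity
    have hP : (0:ℝ) < (1 + ‖x‖) ^ A * (1 + (‖x‖ + t)) ^ B' :=
      mul_pos (Real.rpow_pos_of_pos (by positivity) _)
        (Real.rpow_pos_of_pos (by linarith) _)
    have inv1 : (1 + ‖x‖) ^ (-A) * (1 + (‖x‖ + t)) ^ (-B') ≤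
        128 * ((1 + |t|) ^ (-p) * (1 + ρ) ^ (-q)) := by
      have h2 : 1 / ((1 + ‖x‖) ^ A * (1 + (‖x‖ + t)) ^ B') ≤
          128 / ((1 + |t|) ^ p * (1 + ρ) ^ q) := by
        rw [div_le_div_iff₀ hP hL]
        nlinarith [key]
      calc (1 + ‖x‖) ^ (-A) * (1 + (‖x‖ + t)) ^ (-B')
          = 1 / ((1 + ‖x‖) ^ A * (1 + (‖x‖ + t)) ^ B') := by
            rw [Real.rpow_neg (by positivity), Real.rpow_neg (by linarith)]
            rw [one_div, mul_inv]
        _ ≤ 128 / ((1 + |t|) ^ p * (1 + ρ) ^ q) := h2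
        _ = 128 * ((1 + |t|) ^ (-p) * (1 + ρ) ^ (-q)) := by
            rw [Real.rpow_neg (by positivity), Real.rpow_neg (by positivity)]
            rw [div_eq_mul_inv, mul_inv]
    have split := aniso_split (x 1) (x 2) q hq0
    rw [← hρdef] at split
    have nnp : (0:ℝ) ≤ (1 + |t|) ^ (-p) := Real.rpow_nonneg (by positivity) _
    calc |M| * ((1 + ‖x‖) ^ (-A) * (1 + (‖x‖ + t)) ^ (-B'))
        ≤ |M| * (128 * ((1 + |t|) ^ (-p) * (1 + ρ) ^ (-q))) :=
          mul_le_mul_of_nonneg_left inv1 (abs_nonneg M)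
      _ ≤ |M| * (128 * ((1 + |t|) ^ (-p) *
            ((1 + |x 1|) ^ (-(q / 2)) * (1 + |x 2|) ^ (-(q / 2))))) := by
          apply mul_le_mul_of_nonneg_left _ (abs_nonneg M)
          apply mul_le_mul_of_nonneg_left _ (by norm_num : (0:ℝ) ≤ 128)
          exact mul_le_mul_of_nonneg_left split nnp
      _ = (128 * |M|) * ((1 + |x 0|) ^ (-p) *
            ((1 + |x 1|) ^ (-(q / 2)) * (1 + |x 2|) ^ (-(q / 2)))) := by
          rw [← htdef]; ring
end

section
/- Let A > 0 and let h : ℝ³ → ℝ satisfy |h(z)| ≤ |z|^{-4} for |z| ≥ 1. If g : ℝ³ → ℝ satisfies |g(y)| ≤ M(1+|y|)^{-9/2}, then for all x with |x| ≥ 2, ∫_{|x−y|≥1} |h(x−y)||g(y)| dy ≤ C M (1+|x|)^{-4}, with C an absolute constant. -/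
open MeasureTheory

private lemma aux_div_rpow4 {a c : ℝ} (ha : 0 ≤ a) (hc : 0 ≤ c) :
    (a / c) ^ (-(4:ℝ)) = c ^ (4:ℝ) * a ^ (-(4:ℝ)) := by
  rw [Real.div_rpow ha hc, div_eq_mul_inv, ← Real.rpow_neg hc, neg_neg, mul_comm]

private lemma aux_pow4 : (3:ℝ) ^ (4:ℝ) = 81 ∧ (2:ℝ) ^ (4:ℝ) = 16 := by
  rw [show (4:ℝ) = ((4:ℕ):ℝ) by norm_num, Real.rpow_natCast, Real.rpow_natCast]
  norm_num

theorem far_field_conv_estimate :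
    ∃ C > 0, ∀ (M : ℝ) (h g : EuclideanSpace ℝ (Fin 3) → ℝ),
      Measurable h → Measurable g →
      (∀ z, 1 ≤ ‖z‖ → |h z| ≤ ‖z‖ ^ (-(4 : ℝ))) →
      (∀ y, |g y| ≤ M * (1 + ‖y‖) ^ (-(9 / 2 : ℝ))) →
      ∀ x : EuclideanSpace ℝ (Fin 3), 2 ≤ ‖x‖ →
        (∫ y in {y : EuclideanSpace ℝ (Fin 3) | 1 ≤ ‖x - y‖}, |h (x - y)| * |g y|)
          ≤ C * M * (1 + ‖x‖) ^ (-(4 : ℝ)) := by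
  classical
  set E := EuclideanSpace ℝ (Fin 3) with hE
  have h3 : (Module.finrank ℝ E : ℝ) = 3 := by
    show (Module.finrank ℝ (EuclideanSpace ℝ (Fin 3)) : ℝ) = 3
    simp [finrank_euclideanSpace_fin]
  have hI4 : Integrable (fun z : E => (1 + ‖z‖) ^ (-(4:ℝ))) := by
    exact integrable_one_add_norm (by rw [h3]; norm_num)
  have hI92 : Integrable (fun z : E => (1 + ‖z‖) ^ (-(9/2:ℝ))) := by
    exact integrable_one_add_norm (by rw [h3]; norm_num)
  have hOuter : MeasurableSet {z : E | 1 ≤ ‖z‖} :=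
    measurableSet_le measurable_const measurable_norm
  -- integrability of ‖z‖^{-4} outside the unit ball
  have hIout : IntegrableOn (fun z : E => ‖z‖ ^ (-(4:ℝ))) {z : E | 1 ≤ ‖z‖} := by
    refine ((hI4.const_mul 16).restrict).mono'
      ((by fun_prop : Measurable fun z : E => ‖z‖ ^ (-(4:ℝ))).aestronglyMeasurable) ?_
    refine (ae_restrict_iff' hOuter).2 (ae_of_all _ fun z hz => ?_)
    have h1 : (1:ℝ) ≤ ‖z‖ := hz
    rw [Real.norm_eq_abs, abs_of_nonneg (Real.rpow_nonneg (norm_nonneg _) _)]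
    have hle : (1 + ‖z‖) / 2 ≤ ‖z‖ := by linarith
    calc ‖z‖ ^ (-(4:ℝ)) ≤ ((1 + ‖z‖)/2) ^ (-(4:ℝ)) :=
          Real.rpow_le_rpow_of_nonpos (by linarith) hle (by norm_num)
      _ = 16 * (1 + ‖z‖) ^ (-(4:ℝ)) := by
          rw [aux_div_rpow4 (by linarith) (by norm_num), aux_pow4.2]
  set I1 : ℝ := ∫ y : E, (1 + ‖y‖) ^ (-(9/2:ℝ)) with hI1def
  set I2 : ℝ := ∫ z in {z : E | 1 ≤ ‖z‖}, ‖z‖ ^ (-(4:ℝ)) with hI2def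
  have hI1nn : 0 ≤ I1 := integral_nonneg fun y => Real.rpow_nonneg (by positivity) _
  have hI2nn : 0 ≤ I2 :=
    setIntegral_nonneg hOuter fun z _ => Real.rpow_nonneg (norm_nonneg _) _
  refine ⟨81 * I1 + 16 * I2 + 1, by positivity, ?_⟩
  intro M h g hh hg hhb hgb x hx
  have hM : 0 ≤ M := by
    have := hgb 0
    simp [Real.one_rpow] at this
    exact le_trans (abs_nonneg _) this
  set S : Set E := {y : E | 1 ≤ ‖x - y‖} with hSdef
  set A : Set E := {y : E | ‖y‖ ≤ ‖x‖ / 2} with hAdef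
  have hS : MeasurableSet S :=
    measurableSet_le measurable_const (measurable_const.sub measurable_id).norm
  have hA : MeasurableSet A := measurableSet_le measurable_norm measurable_const
  set f : E → ℝ := fun y => |h (x - y)| * |g y| with hfdef
  have hfmeas : Measurable f :=
    ((hh.comp (measurable_const.sub measurable_id)).abs).mul hg.abs
  have hfnn : ∀ y, 0 ≤ f y := fun y => mul_nonneg (abs_nonneg _) (abs_nonneg _)
  have hxpos : (0:ℝ) < 1 + ‖x‖ := by linarith
  have hpow_nn : 0 ≤ (1 + ‖x‖) ^ (-(4:ℝ)) := Real.rpow_nonneg hxpos.le _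
  -- integrability of f on S
  have hIntS : IntegrableOn f S := by
    refine ((hI92.const_mul M).restrict).mono' hfmeas.aestronglyMeasurable ?_
    refine (ae_restrict_iff' hS).2 (ae_of_all _ fun y hy => ?_)
    have h1 : (1:ℝ) ≤ ‖x - y‖ := hy
    have hh1 : |h (x - y)| ≤ 1 :=
      le_trans (hhb _ h1) (Real.rpow_le_one_of_one_le_of_nonpos h1 (by norm_num))
    rw [Real.norm_eq_abs, abs_of_nonneg (hfnn y)]
    calc f y ≤ 1 * |g y| :=
          mul_le_mul_of_nonneg_right hh1 (abs_nonneg _)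
      _ = |g y| := one_mul _
      _ ≤ M * (1 + ‖y‖) ^ (-(9/2:ℝ)) := hgb y
  -- indicator trick for translation invariance
  set F : E → ℝ := Set.indicator {z : E | 1 ≤ ‖z‖} (fun z => ‖z‖ ^ (-(4:ℝ))) with hFdef
  have hFint : Integrable F := (integrable_indicator_iff hOuter).2 hIout
  have hFcomp : Integrable (fun y : E => F (x - y)) := hFint.comp_sub_left x
  have hkey : Set.indicator S (fun y : E => ‖x - y‖ ^ (-(4:ℝ))) = fun y => F (x - y) := by
    funext y
    by_cases hy : y ∈ S
    · rw [Set.indicator_of_mem hy]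
      exact (Set.indicator_of_mem (show x - y ∈ {z : E | 1 ≤ ‖z‖} from hy) (fun z : E => ‖z‖ ^ (-(4:ℝ)))).symm
    · rw [Set.indicator_of_notMem hy]
      exact (Set.indicator_of_notMem (show x - y ∉ {z : E | 1 ≤ ‖z‖} from hy) (fun z : E => ‖z‖ ^ (-(4:ℝ)))).symm
  have hIntS4 : IntegrableOn (fun y : E => ‖x - y‖ ^ (-(4:ℝ))) S := by
    have hh' : Integrable (Set.indicator S (fun y : E => ‖x - y‖ ^ (-(4:ℝ)))) := by
      rw [hkey]; exact hFcomp
    exact (integrable_indicator_iff hS).1 hh'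
  have hS4nn : ∀ y : E, (0:ℝ) ≤ ‖x - y‖ ^ (-(4:ℝ)) :=
    fun y => Real.rpow_nonneg (norm_nonneg _) _
  have hIntS4val : (∫ y in S, ‖x - y‖ ^ (-(4:ℝ))) = I2 := by
    rw [← integral_indicator hS, hkey, integral_sub_left_eq_self F volume x,
      hFdef, integral_indicator hOuter]
  -- piece A estimate
  have pieceA : (∫ y in S ∩ A, f y) ≤ 81 * I1 * (M * (1 + ‖x‖) ^ (-(4:ℝ))) := by
    have hptA : ∀ y ∈ S ∩ A, f y ≤
        (81 * (1 + ‖x‖) ^ (-(4:ℝ)) * M) * (1 + ‖y‖) ^ (-(9/2:ℝ)) := by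
      rintro y ⟨hyS, hyA⟩
      have h1 : (1:ℝ) ≤ ‖x - y‖ := hyS
      have hyA' : ‖y‖ ≤ ‖x‖ / 2 := hyA
      have hlow : (1 + ‖x‖) / 3 ≤ ‖x - y‖ := by
        have := norm_sub_norm_le x y
        have h2 : ‖x‖ - ‖y‖ ≤ ‖x - y‖ := le_trans (le_abs_self _) (abs_norm_sub_norm_le x y)
        linarith
      have hhy : |h (x - y)| ≤ 81 * (1 + ‖x‖) ^ (-(4:ℝ)) := by
        calc |h (x - y)| ≤ ‖x - y‖ ^ (-(4:ℝ)) := hhb _ h1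
          _ ≤ ((1 + ‖x‖) / 3) ^ (-(4:ℝ)) :=
              Real.rpow_le_rpow_of_nonpos (by positivity) hlow (by norm_num)
          _ = 81 * (1 + ‖x‖) ^ (-(4:ℝ)) := by
              rw [aux_div_rpow4 hxpos.le (by norm_num), aux_pow4.1]
      calc f y ≤ (81 * (1 + ‖x‖) ^ (-(4:ℝ))) * (M * (1 + ‖y‖) ^ (-(9/2:ℝ))) :=
            mul_le_mul hhy (hgb y) (abs_nonneg _) (by positivity)
        _ = (81 * (1 + ‖x‖) ^ (-(4:ℝ)) * M) * (1 + ‖y‖) ^ (-(9/2:ℝ)) := by ring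
    calc (∫ y in S ∩ A, f y)
        ≤ ∫ y in S ∩ A, (81 * (1 + ‖x‖) ^ (-(4:ℝ)) * M) * (1 + ‖y‖) ^ (-(9/2:ℝ)) :=
          setIntegral_mono_on (hIntS.mono_set Set.inter_subset_left)
            ((hI92.const_mul _).integrableOn) (hS.inter hA) hptA
      _ = (81 * (1 + ‖x‖) ^ (-(4:ℝ)) * M) * ∫ y in S ∩ A, (1 + ‖y‖) ^ (-(9/2:ℝ)) :=
          integral_const_mul _ _
      _ ≤ (81 * (1 + ‖x‖) ^ (-(4:ℝ)) * M) * I1 := by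
          refine mul_le_mul_of_nonneg_left ?_ (by positivity)
          exact setIntegral_le_integral hI92
            (ae_of_all _ fun y => Real.rpow_nonneg (by positivity) _)
      _ = 81 * I1 * (M * (1 + ‖x‖) ^ (-(4:ℝ))) := by ring
  -- piece B estimate
  have pieceB : (∫ y in S \ A, f y) ≤ 16 * I2 * (M * (1 + ‖x‖) ^ (-(4:ℝ))) := by
    have hptB : ∀ y ∈ S \ A, f y ≤
        (16 * (1 + ‖x‖) ^ (-(4:ℝ)) * M) * ‖x - y‖ ^ (-(4:ℝ)) := by
      rintro y ⟨hyS, hyA⟩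
      have h1 : (1:ℝ) ≤ ‖x - y‖ := hyS
      have hyA' : ‖x‖ / 2 < ‖y‖ := by
        by_contra hc
        exact hyA (by push_neg at hc; exact hc)
      have hy1 : (1:ℝ) ≤ 1 + ‖y‖ := by
        have := norm_nonneg y; linarith
      have hlow : (1 + ‖x‖) / 2 ≤ 1 + ‖y‖ := by linarith
      have hgy : |g y| ≤ 16 * (1 + ‖x‖) ^ (-(4:ℝ)) * M := by
        calc |g y| ≤ M * (1 + ‖y‖) ^ (-(9/2:ℝ)) := hgb y
          _ ≤ M * (1 + ‖y‖) ^ (-(4:ℝ)) :=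
              mul_le_mul_of_nonneg_left
                (Real.rpow_le_rpow_of_exponent_le hy1 (by norm_num)) hM
          _ ≤ M * (((1 + ‖x‖) / 2) ^ (-(4:ℝ))) :=
              mul_le_mul_of_nonneg_left
                (Real.rpow_le_rpow_of_nonpos (by positivity) hlow (by norm_num)) hM
          _ = 16 * (1 + ‖x‖) ^ (-(4:ℝ)) * M := by
              rw [aux_div_rpow4 hxpos.le (by norm_num), aux_pow4.2]; ring
      calc f y ≤ ‖x - y‖ ^ (-(4:ℝ)) * (16 * (1 + ‖x‖) ^ (-(4:ℝ)) * M) :=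
            mul_le_mul (hhb _ h1) hgy (abs_nonneg _) (hS4nn y)
        _ = (16 * (1 + ‖x‖) ^ (-(4:ℝ)) * M) * ‖x - y‖ ^ (-(4:ℝ)) := by ring
    calc (∫ y in S \ A, f y)
        ≤ ∫ y in S \ A, (16 * (1 + ‖x‖) ^ (-(4:ℝ)) * M) * ‖x - y‖ ^ (-(4:ℝ)) :=
          setIntegral_mono_on (hIntS.mono_set Set.diff_subset)
            ((hIntS4.mono_set Set.diff_subset).const_mul _) (hS.diff hA) hptB
      _ = (16 * (1 + ‖x‖) ^ (-(4:ℝ)) * M) * ∫ y in S \ A, ‖x - y‖ ^ (-(4:ℝ)) :=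
          integral_const_mul _ _
      _ ≤ (16 * (1 + ‖x‖) ^ (-(4:ℝ)) * M) * I2 := by
          refine mul_le_mul_of_nonneg_left ?_ (by positivity)
          rw [← hIntS4val]
          exact setIntegral_mono_set hIntS4
            (ae_of_all _ fun y => hS4nn y) (Set.diff_subset.eventuallyLE)
      _ = 16 * I2 * (M * (1 + ‖x‖) ^ (-(4:ℝ))) := by ring
  have hsplit : (∫ y in S ∩ A, f y) + (∫ y in S \ A, f y) = ∫ y in S, f y :=
    integral_inter_add_diff hA hIntS
  have hMx : 0 ≤ M * (1 + ‖x‖) ^ (-(4:ℝ)) := mul_nonneg hM hpow_nn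
  calc (∫ y in S, f y) = (∫ y in S ∩ A, f y) + (∫ y in S \ A, f y) := hsplit.symm
    _ ≤ 81 * I1 * (M * (1 + ‖x‖) ^ (-(4:ℝ))) + 16 * I2 * (M * (1 + ‖x‖) ^ (-(4:ℝ))) :=
        add_le_add pieceA pieceB
    _ ≤ (81 * I1 + 16 * I2 + 1) * M * (1 + ‖x‖) ^ (-(4:ℝ)) := by nlinarith
end
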